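/- arXiv:math/0512047 — 4 statements merged into one kernel-verified Lean document; each statement's English description precedes it below -/
import Mathlib

section
/- Fix a real number r > 0. Let f = Σ_{n≥0} a_n X^n and g = Σ_{n≥0} b_n X^n be formal power series with complex coefficients such that the families ((r^n/n!)·|a_n|)_{n∈ℕ} and ((r^n/n!)·|b_n|)_{n∈ℕ} are summable. Then the family ((r^n/n!)·|c_n|)_{n∈ℕ} is summable, where c_n = Σ_{k=0}^{n} a_k·b_{n−k} is the n-th coefficient of the product f·g, and moreover Σ_{n≥0} (r^n/n!)·|c_n| ≤ (Σ_{n≥0} (r^n/n!)·|a_n|)·(Σ_{n≥0} (r^n/n!)·|b_n|). -/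
/-- if the families ((r^n/n!)|a_n|) and ((r^n/n!)|b_n|) attached to
`f = Σ a_n X^n` and `g = Σ b_n X^n` are summable, then so is the corresponding family
for the product `f·g` (whose n-th coefficient is `c_n = Σ_{k=0}^n a_k b_{n-k}`), and
`‖f·g‖_r ≤ ‖f‖_r · ‖g‖_r`. -/
theorem wnorm_mul_le (r : ℝ) (hr : 0 < r) (f g : PowerSeries ℂ)
    (hf : Summable fun n : ℕ => r ^ n / n.factorial * ‖PowerSeries.coeff n f‖)
    (hg : Summable fun n : ℕ => r ^ n / n.factorial * ‖PowerSeries.coeff n g‖) :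
    (∀ n : ℕ, PowerSeries.coeff n (f * g) =
      ∑ k ∈ Finset.range (n + 1), PowerSeries.coeff k f * PowerSeries.coeff (n - k) g) ∧
    (Summable fun n : ℕ => r ^ n / n.factorial * ‖PowerSeries.coeff n (f * g)‖) ∧
    (∑' n : ℕ, r ^ n / n.factorial * ‖PowerSeries.coeff n (f * g)‖) ≤
      (∑' n : ℕ, r ^ n / n.factorial * ‖PowerSeries.coeff n f‖) *
        (∑' n : ℕ, r ^ n / n.factorial * ‖PowerSeries.coeff n g‖) := by
  set A : ℕ → ℝ := fun n => r ^ n / n.factorial * ‖PowerSeries.coeff n f‖ with hA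
  set B : ℕ → ℝ := fun n => r ^ n / n.factorial * ‖PowerSeries.coeff n g‖ with hB
  have hApos : ∀ n, 0 ≤ A n := fun n => by positivity
  have hBpos : ∀ n, 0 ≤ B n := fun n => by positivity
  have hAn : Summable fun n => ‖A n‖ := by
    simpa [Real.norm_of_nonneg (hApos _)] using hf
  have hBn : Summable fun n => ‖B n‖ := by
    simpa [Real.norm_of_nonneg (hBpos _)] using hg
  have hcoeff : ∀ n : ℕ, PowerSeries.coeff n (f * g) =
      ∑ k ∈ Finset.range (n + 1), PowerSeries.coeff k f * PowerSeries.coeff (n - k) g := by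
    intro n
    rw [PowerSeries.coeff_mul]
    exact Finset.Nat.sum_antidiagonal_eq_sum_range_succ
      (fun k l => PowerSeries.coeff k f * PowerSeries.coeff l g) n
  have key : ∀ n : ℕ, r ^ n / n.factorial * ‖PowerSeries.coeff n (f * g)‖ ≤
      ∑ k ∈ Finset.range (n + 1), A k * B (n - k) := by
    intro n
    rw [hcoeff n]
    calc r ^ n / n.factorial * ‖∑ k ∈ Finset.range (n + 1),
          PowerSeries.coeff k f * PowerSeries.coeff (n - k) g‖
        ≤ r ^ n / n.factorial * ∑ k ∈ Finset.range (n + 1),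
          ‖PowerSeries.coeff k f‖ * ‖PowerSeries.coeff (n - k) g‖ := by
          apply mul_le_mul_of_nonneg_left _ (by positivity)
          refine (norm_sum_le _ _).trans ?_
          exact le_of_eq (Finset.sum_congr rfl fun k _ => norm_mul _ _)
      _ = ∑ k ∈ Finset.range (n + 1), r ^ n / n.factorial *
          (‖PowerSeries.coeff k f‖ * ‖PowerSeries.coeff (n - k) g‖) :=
          Finset.mul_sum _ _ _
      _ ≤ ∑ k ∈ Finset.range (n + 1), A k * B (n - k) := by
          apply Finset.sum_le_sum
          intro k hk
          have hkn : k ≤ n := Nat.lt_succ_iff.mp (Finset.mem_range.mp hk)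
          have hfac : (k.factorial * (n - k).factorial : ℕ) ≤ n.factorial :=
            Nat.le_of_dvd n.factorial_pos (Nat.factorial_mul_factorial_dvd_factorial hkn)
          have hrn : r ^ n = r ^ k * r ^ (n - k) := by
            rw [← pow_add, Nat.add_sub_cancel' hkn]
          have hcoef : r ^ n / n.factorial ≤ (r ^ k / k.factorial) * (r ^ (n - k) / (n - k).factorial) := by
            rw [hrn, div_mul_div_comm]
            apply div_le_div_of_nonneg_left (by positivity) (by positivity)
            exact_mod_cast hfac
          have := mul_le_mul_of_nonneg_right hcoef
            (mul_nonneg (norm_nonneg (PowerSeries.coeff k f)) (norm_nonneg (PowerSeries.coeff (n - k) g)))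
          refine this.trans (le_of_eq ?_)
          simp only [hA, hB]
          ring
  have hCsum : Summable fun n => ∑ k ∈ Finset.range (n + 1), A k * B (n - k) :=
    (summable_norm_sum_mul_range_of_summable_norm hAn hBn).of_norm
  have hsum : Summable fun n : ℕ => r ^ n / n.factorial * ‖PowerSeries.coeff n (f * g)‖ :=
    Summable.of_nonneg_of_le (fun n => by positivity) key hCsum
  refine ⟨hcoeff, hsum, ?_⟩
  calc (∑' n : ℕ, r ^ n / n.factorial * ‖PowerSeries.coeff n (f * g)‖)
      ≤ ∑' n : ℕ, ∑ k ∈ Finset.range (n + 1), A k * B (n - k) :=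
        Summable.tsum_le_tsum key hsum hCsum
    _ = (∑' n, A n) * ∑' n, B n :=
        (tsum_mul_tsum_eq_tsum_sum_range_of_summable_norm hAn hBn).symm
end

section
/- Let G be the subring of ℂ[[X]] consisting of power series Σ_{n≥0} a_n X^n for which there exist A, C > 0 with |a_n| ≤ A·C^n·n! for all n. If f ∈ G has nonzero constant coefficient, then the inverse of f in ℂ[[X]] again belongs to G; that is, f is a unit of G. Consequently G is a local ring whose maximal ideal is exactly the set of elements of G with vanishing constant coefficient. -/
/-- The Gevrey-type growth condition defining the ring `G = k₀ = W_pt(0)` of the paper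
(written in the variable `X = τ⁻¹`): `|a_n| ≤ A·C^n·n!` for some `A, C > 0`. -/
def Gevrey (f : PowerSeries ℂ) : Prop :=
  ∃ A C : ℝ, 0 < A ∧ 0 < C ∧
    ∀ n : ℕ, ‖PowerSeries.coeff n f‖ ≤ A * C ^ n * n.factorial

open PowerSeries Finset in
lemma gevrey_inv (f : PowerSeries ℂ) (hf : Gevrey f)
    (h0 : PowerSeries.constantCoeff f ≠ 0) : Gevrey f⁻¹ := by
  obtain ⟨A, C, hA, hC, hb⟩ := hf
  set B : ℝ := ‖(PowerSeries.constantCoeff f)⁻¹‖ with hBdef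
  have hB : 0 < B := by
    rw [hBdef]
    exact norm_pos_iff.mpr (inv_ne_zero h0)
  set D : ℝ := C * (1 + A * B) with hDdef
  have hD : 0 < D := by positivity
  have hCD : C < D := by
    rw [hDdef]
    nlinarith [mul_pos (mul_pos hC hA) hB]
  refine ⟨B, D, hB, hD, ?_⟩
  intro n
  induction n using Nat.strong_induction_on with
  | _ n ih =>
    rcases Nat.eq_zero_or_pos n with rfl | hn
    · have hBe : B = ‖PowerSeries.constantCoeff f‖⁻¹ := by
        rw [hBdef, norm_inv]
      simp [PowerSeries.coeff_inv, hBe, Nat.factorial]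
    rw [PowerSeries.coeff_inv, if_neg hn.ne']
    rw [norm_mul, norm_neg]
    have key : ‖∑ x ∈ antidiagonal n,
        if x.2 < n then (coeff x.1 f) * (coeff x.2 f⁻¹) else 0‖
        ≤ D ^ n * n.factorial := by
      calc ‖∑ x ∈ antidiagonal n,
            if x.2 < n then (coeff x.1 f) * (coeff x.2 f⁻¹) else 0‖
          ≤ ∑ x ∈ antidiagonal n,
            ‖if x.2 < n then (coeff x.1 f) * (coeff x.2 f⁻¹) else 0‖ :=
            norm_sum_le _ _
        _ ≤ ∑ x ∈ antidiagonal n,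
            (if x.2 < n then (A * B * n.factorial) * (C ^ x.1 * D ^ x.2) else 0) := by
            refine Finset.sum_le_sum fun x hx => ?_
            rw [Finset.HasAntidiagonal.mem_antidiagonal] at hx
            by_cases hx2 : x.2 < n
            · rw [if_pos hx2, if_pos hx2, norm_mul]
              have hfac : (x.1.factorial : ℝ) * (x.2.factorial : ℝ) ≤ n.factorial := by
                have hdvd := Nat.factorial_mul_factorial_dvd_factorial_add x.1 x.2
                rw [hx] at hdvd
                exact_mod_cast Nat.le_of_dvd n.factorial_pos hdvd
              have h1 : ‖coeff x.1 f‖ ≤ A * C ^ x.1 * x.1.factorial := hb x.1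
              have h2 : ‖coeff x.2 f⁻¹‖ ≤ B * D ^ x.2 * x.2.factorial := ih x.2 hx2
              calc ‖coeff x.1 f‖ * ‖coeff x.2 f⁻¹‖
                  ≤ (A * C ^ x.1 * x.1.factorial) * (B * D ^ x.2 * x.2.factorial) := by
                    apply mul_le_mul h1 h2 (norm_nonneg _)
                    positivity
                _ = (A * B * ((x.1.factorial : ℝ) * x.2.factorial)) * (C ^ x.1 * D ^ x.2) := by
                    ring
                _ ≤ (A * B * n.factorial) * (C ^ x.1 * D ^ x.2) := by
                    apply mul_le_mul_of_nonneg_right _ (by positivity)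
                    apply mul_le_mul_of_nonneg_left hfac (by positivity)
            · rw [if_neg hx2, if_neg hx2, norm_zero]
        _ = ∑ i ∈ Finset.range (n + 1),
            (if n - i < n then (A * B * n.factorial) * (C ^ i * D ^ (n - i)) else 0) := by
            rw [Finset.Nat.sum_antidiagonal_eq_sum_range_succ_mk]
        _ = ∑ i ∈ Finset.range n,
            (A * B * n.factorial) * (C ^ (i + 1) * D ^ (n - (i + 1))) := by
            rw [Finset.sum_range_succ']
            have h0' : ¬ (n - 0 < n) := by omega
            rw [if_neg h0', add_zero]
            refine Finset.sum_congr rfl fun i hi => ?_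
            rw [Finset.mem_range] at hi
            rw [if_pos (by omega)]
        _ = n.factorial * ((∑ i ∈ Finset.range n, C ^ i * D ^ (n - 1 - i)) * (D - C)) := by
            rw [Finset.sum_mul, Finset.mul_sum]
            refine Finset.sum_congr rfl fun i hi => ?_
            rw [Finset.mem_range] at hi
            have h1 : n - (i + 1) = n - 1 - i := by omega
            have h2 : A * B * C = D - C := by rw [hDdef]; ring
            rw [h1, pow_succ, ← h2]
            ring
        _ = n.factorial * -((∑ i ∈ Finset.range n, C ^ i * D ^ (n - 1 - i)) * (C - D)) := by
            ring
        _ = n.factorial * (D ^ n - C ^ n) := by rw [geom_sum₂_mul]; ring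
        _ ≤ D ^ n * n.factorial := by
            rw [mul_comm]
            apply mul_le_mul_of_nonneg_right _ (by positivity)
            nlinarith [pow_pos hC n]
    calc ‖(PowerSeries.constantCoeff f)⁻¹‖ * ‖∑ x ∈ antidiagonal n,
            if x.2 < n then (coeff x.1 f) * (coeff x.2 f⁻¹) else 0‖
        ≤ B * (D ^ n * n.factorial) := by
          apply mul_le_mul_of_nonneg_left key hB.le
      _ = B * D ^ n * n.factorial := by ring

/-- if `f ∈ G` has nonzero constant coefficient, then its inverse in
`ℂ[[X]]` again belongs to `G` (so `f` is a unit of `G`); consequently `G` (realized as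
a subalgebra `S` of `ℂ[[X]]`) is a local ring whose maximal ideal is exactly the set of
elements of `G` with vanishing constant coefficient. -/
theorem gevrey_local_ring (S : Subalgebra ℂ (PowerSeries ℂ))
    (hS : (S : Set (PowerSeries ℂ)) = {f | Gevrey f}) :
    (∀ f : PowerSeries ℂ, Gevrey f → PowerSeries.constantCoeff f ≠ 0 →
      ∃ g : PowerSeries ℂ, Gevrey g ∧ f * g = 1 ∧ g * f = 1) ∧
    ∃ h : IsLocalRing S,
      ((@IsLocalRing.maximalIdeal S _ h : Ideal S) : Set S) =
        {f : S | PowerSeries.constantCoeff (f : PowerSeries ℂ) = 0} := by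
  have hmem : ∀ f : PowerSeries ℂ, f ∈ S ↔ Gevrey f := by
    intro f
    constructor
    · intro h; have := hS ▸ (Set.mem_setOf_eq ▸ h); exact this
    · intro h; show f ∈ (S : Set (PowerSeries ℂ)); rw [hS]; exact h
  have key : ∀ f : PowerSeries ℂ, Gevrey f → PowerSeries.constantCoeff f ≠ 0 →
      ∃ g : PowerSeries ℂ, Gevrey g ∧ f * g = 1 ∧ g * f = 1 := by
    intro f hf h0
    exact ⟨f⁻¹, gevrey_inv f hf h0, PowerSeries.mul_inv_cancel f h0,
      PowerSeries.inv_mul_cancel f h0⟩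
  refine ⟨key, ?_⟩
  -- units of S are exactly elements with nonzero constant coefficient
  have hunit : ∀ x : S, IsUnit x ↔ PowerSeries.constantCoeff (x : PowerSeries ℂ) ≠ 0 := by
    intro x
    constructor
    · rintro ⟨u, rfl⟩
      have h1 : ((u : S) : PowerSeries ℂ) * ((u⁻¹ : Sˣ) : S) = 1 := by
        exact_mod_cast congrArg (Subtype.val) u.mul_inv
      intro hc
      have := congrArg (PowerSeries.constantCoeff) h1
      rw [map_mul, hc, zero_mul] at this
      exact zero_ne_one this
    · intro h0
      obtain ⟨g, hg, hfg, _⟩ := key x ((hmem x).mp x.2) h0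
      have hgS : g ∈ S := (hmem g).mpr hg
      refine IsUnit.of_mul_eq_one (a := x) ⟨g, hgS⟩ (Subtype.ext ?_)
      show (x : PowerSeries ℂ) * g = 1
      exact hfg
  haveI : Nontrivial S := by
    refine ⟨1, 0, fun h => ?_⟩
    have : (1 : PowerSeries ℂ) = 0 := congrArg Subtype.val h
    exact one_ne_zero this
  have hloc : IsLocalRing S := by
    apply IsLocalRing.of_isUnit_or_isUnit_one_sub_self
    intro a
    by_cases hc : PowerSeries.constantCoeff (a : PowerSeries ℂ) = 0
    · right
      rw [hunit]
      push_cast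
      rw [map_sub, map_one, hc, sub_zero]
      exact one_ne_zero
    · left
      exact (hunit a).mpr hc
  refine ⟨hloc, ?_⟩
  ext x
  simp only [SetLike.mem_coe, IsLocalRing.mem_maximalIdeal, mem_nonunits_iff,
    Set.mem_setOf_eq, hunit x, not_not]
end

section
/- Let G be the subring of ℂ[[X]] consisting of power series Σ_{n≥0} a_n X^n for which there exist A, C > 0 with |a_n| ≤ A·C^n·n! for all n. Then G is a discrete valuation ring whose maximal ideal is generated by X; in particular every nonzero element of G can be written as X^m·u for a unique m ∈ ℕ and a unit u of G. -/
open PowerSeries Finset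

private lemma telescope_geom (C D : ℝ) (hC : 0 < C) (n : ℕ) :
    (D - C) * ∑ j ∈ range n, C ^ (j + 1) * D ^ (n - 1 - j) ≤ C * D ^ n := by
  have h : ∀ j ∈ range n, (D - C) * (C ^ (j + 1) * D ^ (n - 1 - j))
      = (fun j => C ^ (j + 1) * D ^ (n - j)) j
        - (fun j => C ^ (j + 1) * D ^ (n - j)) (j + 1) := by
    intro j hj
    have hj' : j < n := mem_range.mp hj
    have h1 : n - j = (n - 1 - j) + 1 := by omega
    have h2 : n - (j + 1) = n - 1 - j := by omega
    simp only [h1, h2]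
    ring
  rw [Finset.mul_sum, Finset.sum_congr rfl h,
    Finset.sum_range_sub' (fun j => C ^ (j + 1) * D ^ (n - j))]
  simp only [pow_one, Nat.sub_zero, Nat.sub_self, pow_zero, mul_one, zero_add]
  have : (0:ℝ) ≤ C ^ (n + 1) := le_of_lt (pow_pos hC _)
  linarith

private lemma Gevrey.inv {f : PowerSeries ℂ} (hf : Gevrey f)
    (h0 : PowerSeries.constantCoeff f ≠ 0) : Gevrey f⁻¹ := by
  obtain ⟨A, C, hA, hC, hb⟩ := hf
  set a0 : ℝ := ‖(PowerSeries.constantCoeff f)⁻¹‖ with ha0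
  have ha0pos : 0 < a0 := norm_pos_iff.mpr (inv_ne_zero h0)
  set E : ℝ := a0 * A with hEdef
  have hE : 0 < E := mul_pos ha0pos hA
  set B : ℝ := a0 + 1 with hBdef
  have hB : 0 < B := by positivity
  set D : ℝ := C * (1 + E) with hDdef
  have hD : 0 < D := by positivity
  have hCD : C ≤ D := by nlinarith
  refine ⟨B, D, hB, hD, ?_⟩
  intro n
  induction n using Nat.strong_induction_on with
  | _ n ih =>
  rcases Nat.eq_zero_or_pos n with rfl | hn
  · have hcz : coeff 0 f⁻¹ = (PowerSeries.constantCoeff f)⁻¹ := by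
      simp
    rw [hcz]
    simp only [pow_zero, Nat.factorial_zero, Nat.cast_one, mul_one]
    rw [← ha0]
    linarith
  · rw [coeff_inv, if_neg hn.ne']
    rw [norm_mul, norm_neg, norm_inv]
    have hsum : ‖∑ p ∈ antidiagonal n,
        if p.2 < n then coeff p.1 f * coeff p.2 f⁻¹ else 0‖
        ≤ A * B * n.factorial * ∑ j ∈ range n, C ^ (j + 1) * D ^ (n - 1 - j) := by
      calc ‖∑ p ∈ antidiagonal n,
          if p.2 < n then coeff p.1 f * coeff p.2 f⁻¹ else 0‖
          ≤ ∑ p ∈ antidiagonal n,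
            ‖if p.2 < n then coeff p.1 f * coeff p.2 f⁻¹ else 0‖ :=
            norm_sum_le _ _
        _ = ∑ i ∈ range (n + 1),
            ‖if n - i < n then coeff i f * coeff (n - i) f⁻¹ else 0‖ := by
            rw [Finset.Nat.sum_antidiagonal_eq_sum_range_succ_mk]
        _ = (∑ j ∈ range n,
            ‖if n - (j + 1) < n then coeff (j + 1) f * coeff (n - (j + 1)) f⁻¹ else 0‖)
            + ‖if n - 0 < n then coeff 0 f * coeff (n - 0) f⁻¹ else 0‖ :=
            Finset.sum_range_succ' _ n
        _ ≤ A * B * n.factorial * ∑ j ∈ range n, C ^ (j + 1) * D ^ (n - 1 - j) := by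
            rw [Nat.sub_zero, if_neg (lt_irrefl n), norm_zero, add_zero,
              Finset.mul_sum]
            refine Finset.sum_le_sum fun j hj => ?_
            have hj' : j < n := mem_range.mp hj
            have h1 : n - (j + 1) < n := by omega
            rw [if_pos h1, norm_mul]
            have h2 : n - (j + 1) = n - 1 - j := by omega
            have hih := ih (n - (j + 1)) h1
            have hbj := hb (j + 1)
            have hfact : ((j + 1).factorial : ℝ) * ((n - 1 - j).factorial : ℝ)
                ≤ (n.factorial : ℝ) := by
              have hdvd := Nat.factorial_mul_factorial_dvd_factorial_add (j + 1) (n - 1 - j)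
              have heq : (j + 1) + (n - 1 - j) = n := by omega
              rw [heq] at hdvd
              exact_mod_cast Nat.le_of_dvd n.factorial_pos hdvd
            have hcoeff1 : ‖coeff (j + 1) f‖ ≤ A * C ^ (j + 1) * (j + 1).factorial := hbj
            have hcoeff2 : ‖coeff (n - (j + 1)) f⁻¹‖
                ≤ B * D ^ (n - 1 - j) * (n - 1 - j).factorial := by
              rw [h2] at hih ⊢; exact hih
            calc ‖coeff (j + 1) f‖ * ‖coeff (n - (j + 1)) f⁻¹‖
                ≤ (A * C ^ (j + 1) * (j + 1).factorial)
                  * (B * D ^ (n - 1 - j) * (n - 1 - j).factorial) := by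
                  exact mul_le_mul hcoeff1 hcoeff2 (norm_nonneg _) (by positivity)
              _ = (A * B * (C ^ (j + 1) * D ^ (n - 1 - j)))
                  * (((j + 1).factorial : ℝ) * ((n - 1 - j).factorial : ℝ)) := by ring
              _ ≤ (A * B * (C ^ (j + 1) * D ^ (n - 1 - j))) * (n.factorial : ℝ) := by
                  refine mul_le_mul_of_nonneg_left hfact (by positivity)
              _ = A * B * n.factorial * (C ^ (j + 1) * D ^ (n - 1 - j)) := by ring
    have hgeom : E * ∑ j ∈ range n, C ^ (j + 1) * D ^ (n - 1 - j) ≤ D ^ n := by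
      have htel := telescope_geom C D hC n
      have hDC : D - C = C * E := by rw [hDdef]; ring
      rw [hDC] at htel
      have : C * (E * ∑ j ∈ range n, C ^ (j + 1) * D ^ (n - 1 - j)) ≤ C * D ^ n := by
        calc C * (E * ∑ j ∈ range n, C ^ (j + 1) * D ^ (n - 1 - j))
            = C * E * ∑ j ∈ range n, C ^ (j + 1) * D ^ (n - 1 - j) := by ring
          _ ≤ C * D ^ n := htel
      exact le_of_mul_le_mul_left this hC
    calc ‖(PowerSeries.constantCoeff f)‖⁻¹ * ‖∑ p ∈ antidiagonal n,
          if p.2 < n then coeff p.1 f * coeff p.2 f⁻¹ else 0‖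
        ≤ a0 * (A * B * n.factorial * ∑ j ∈ range n, C ^ (j + 1) * D ^ (n - 1 - j)) := by
          rw [ha0, norm_inv]
          exact mul_le_mul_of_nonneg_left hsum (by positivity)
      _ = B * n.factorial * (E * ∑ j ∈ range n, C ^ (j + 1) * D ^ (n - 1 - j))
          + A * n.factorial * (E * ∑ j ∈ range n, C ^ (j + 1) * D ^ (n - 1 - j))
          - A * n.factorial * (E * ∑ j ∈ range n, C ^ (j + 1) * D ^ (n - 1 - j)) := by
          rw [hEdef]; ring
      _ = B * n.factorial * (E * ∑ j ∈ range n, C ^ (j + 1) * D ^ (n - 1 - j)) := by ring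
      _ ≤ B * n.factorial * D ^ n := by
          refine mul_le_mul_of_nonneg_left hgeom (by positivity)
      _ = B * D ^ n * n.factorial := by ring

private lemma Gevrey.shift {f : PowerSeries ℂ} (hf : Gevrey f)
    (h0 : PowerSeries.constantCoeff f = 0) :
    ∃ g : PowerSeries ℂ, Gevrey g ∧ f = PowerSeries.X * g := by
  obtain ⟨g, hg⟩ := X_dvd_iff.mpr h0
  refine ⟨g, ?_, hg⟩
  obtain ⟨A, C, hA, hC, hb⟩ := hf
  refine ⟨A * C, 2 * C, by positivity, by positivity, fun n => ?_⟩
  have hco : coeff n g = coeff (n + 1) f := by rw [hg, coeff_succ_X_mul]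
  rw [hco]
  have h2 : ((n : ℝ) + 1) ≤ 2 ^ n := by
    exact_mod_cast (Nat.lt_two_pow_self (n := n))
  calc ‖coeff (n + 1) f‖ ≤ A * C ^ (n + 1) * (n + 1).factorial := hb (n + 1)
    _ = (A * C * C ^ n * n.factorial) * ((n : ℝ) + 1) := by
        rw [Nat.factorial_succ]; push_cast; ring
    _ ≤ (A * C * C ^ n * n.factorial) * 2 ^ n := by
        exact mul_le_mul_of_nonneg_left h2 (by positivity)
    _ = A * C * (2 * C) ^ n * n.factorial := by rw [mul_pow]; ring

private lemma gevrey_decomp : ∀ N : ℕ, ∀ f : PowerSeries ℂ, Gevrey f →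
    PowerSeries.coeff N f ≠ 0 →
    ∃ m : ℕ, ∃ g : PowerSeries ℂ, Gevrey g ∧ PowerSeries.constantCoeff g ≠ 0 ∧
      f = PowerSeries.X ^ m * g := by
  intro N
  induction N using Nat.strong_induction_on with
  | _ N ih =>
    intro f hf hN
    by_cases h0 : PowerSeries.constantCoeff f = 0
    · obtain ⟨g, hg, rfl⟩ := hf.shift h0
      have hN0 : N ≠ 0 := by
        rintro rfl
        rw [coeff_zero_eq_constantCoeff] at hN
        exact hN h0
      have hNg : coeff (N - 1) g ≠ 0 := by
        intro h
        apply hN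
        have : N = (N - 1) + 1 := by omega
        rw [this, coeff_succ_X_mul, h]
      obtain ⟨m, h, hh, hh0, rfl⟩ := ih (N - 1) (by omega) g hg hNg
      exact ⟨m + 1, h, hh, hh0, by ring⟩
    · exact ⟨0, f, hf, h0, by rw [pow_zero, one_mul]⟩

/-- `G` (realized as a subalgebra `S` of `ℂ[[X]]`, with `x ∈ S` the
element `X`) is a discrete valuation ring whose maximal ideal is generated by `X`;
in particular every nonzero element of `G` is `X^m·u` for a unique `m ∈ ℕ` and a
unit `u` of `G`. -/
theorem gevrey_dvr (S : Subalgebra ℂ (PowerSeries ℂ))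
    (hS : (S : Set (PowerSeries ℂ)) = {f | Gevrey f})
    (x : S) (hx : (x : PowerSeries ℂ) = PowerSeries.X) :
    IsDiscreteValuationRing S ∧
    (∃ h : IsLocalRing S, (@IsLocalRing.maximalIdeal S _ h : Ideal S) = Ideal.span {x}) ∧
    (∀ f : S, f ≠ 0 → ∃! m : ℕ, ∃ u : Sˣ, f = x ^ m * (u : S)) := by
  have hmem : ∀ f : PowerSeries ℂ, f ∈ S ↔ Gevrey f := by
    intro f
    rw [← SetLike.mem_coe, hS]
    rfl
  -- units of S are exactly elements with nonzero constant coefficient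
  have hunit : ∀ f : S, PowerSeries.constantCoeff (f : PowerSeries ℂ) ≠ 0 → IsUnit f := by
    intro f h0
    have hfG : Gevrey (f : PowerSeries ℂ) := (hmem _).mp f.2
    have hinv : ((f : PowerSeries ℂ))⁻¹ ∈ S := (hmem _).mpr (hfG.inv h0)
    refine IsUnit.of_mul_eq_one (a := f) ⟨_, hinv⟩ ?_
    exact Subtype.ext (PowerSeries.mul_inv_cancel _ h0)
  have hunit' : ∀ f : S, IsUnit f → PowerSeries.constantCoeff (f : PowerSeries ℂ) ≠ 0 := by
    intro f hf
    obtain ⟨u, rfl⟩ := hf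
    have h1 : ((u : S) : PowerSeries ℂ) * (((u⁻¹ : Sˣ) : S) : PowerSeries ℂ) = 1 := by
      rw [← MulMemClass.coe_mul]
      norm_cast
      simp
    have := congrArg (PowerSeries.constantCoeff) h1
    rw [map_mul, map_one] at this
    exact left_ne_zero_of_mul_eq_one this
  -- main existence
  have hmain : ∀ f : S, f ≠ 0 → ∃ m : ℕ, ∃ u : Sˣ, f = x ^ m * (u : S) := by
    intro f hf
    have hfv : (f : PowerSeries ℂ) ≠ 0 := fun h => hf (Subtype.ext h)
    obtain ⟨N, hN⟩ : ∃ N, coeff N (f : PowerSeries ℂ) ≠ 0 := by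
      by_contra h
      push_neg at h
      exact hfv (PowerSeries.ext fun n => by simp [h n])
    obtain ⟨m, g, hg, hg0, hfg⟩ := gevrey_decomp N _ ((hmem _).mp f.2) hN
    have hgS : g ∈ S := (hmem g).mpr hg
    obtain ⟨u, hu⟩ := hunit ⟨g, hgS⟩ hg0
    refine ⟨m, u, Subtype.ext ?_⟩
    have : ((x ^ m * (u : S) : S) : PowerSeries ℂ)
        = ((x : PowerSeries ℂ)) ^ m * (((u : S) : S) : PowerSeries ℂ) := by
      norm_cast
    rw [this, hu, hx, hfg]
  -- order computation for uniqueness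
  have horder : ∀ (m : ℕ) (u : Sˣ),
      PowerSeries.order ((x ^ m * (u : S) : S) : PowerSeries ℂ) = m := by
    intro m u
    have hu0 : PowerSeries.constantCoeff (((u : S) : S) : PowerSeries ℂ) ≠ 0 :=
      hunit' _ u.isUnit
    have hc : ((x ^ m * (u : S) : S) : PowerSeries ℂ)
        = PowerSeries.X ^ m * (((u : S) : S) : PowerSeries ℂ) := by
      rw [← hx]; norm_cast
    rw [hc, PowerSeries.order_mul, PowerSeries.order_X_pow,
      PowerSeries.order_zero_of_unit (IsUnit.of_mul_eq_one _
        (PowerSeries.mul_inv_cancel _ hu0)), add_zero]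
  -- irreducibility of x
  have hX1 : PowerSeries.coeff 1 (PowerSeries.X : PowerSeries ℂ) = 1 := by simp
  have hxirr : Irreducible x := by
    constructor
    · intro h
      have := hunit' x h
      rw [hx] at this
      simp at this
    · intro a b hab
      by_contra hcon
      push_neg at hcon
      obtain ⟨ha, hb⟩ := hcon
      have ha0 : PowerSeries.constantCoeff (a : PowerSeries ℂ) = 0 := by
        by_contra h; exact ha (hunit _ h)
      have hb0 : PowerSeries.constantCoeff (b : PowerSeries ℂ) = 0 := by
        by_contra h; exact hb (hunit _ h)
      have hab' : (PowerSeries.X : PowerSeries ℂ)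
          = (a : PowerSeries ℂ) * (b : PowerSeries ℂ) := by
        rw [← hx, hab]; norm_cast
      have h1 : (1 : ℂ) = coeff 1 ((a : PowerSeries ℂ) * (b : PowerSeries ℂ)) := by
        rw [← hab', hX1]
      rw [PowerSeries.coeff_mul, Finset.Nat.sum_antidiagonal_eq_sum_range_succ_mk] at h1
      rw [Finset.sum_range_succ, Finset.sum_range_succ, Finset.sum_range_zero] at h1
      simp only [Nat.sub_zero, Nat.sub_self, zero_add] at h1
      simp [coeff_zero_eq_constantCoeff, ha0, hb0] at h1
  -- DVR
  have hdvr : IsDiscreteValuationRing S := by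
    refine IsDiscreteValuationRing.ofHasUnitMulPowIrreducibleFactorization ⟨x, hxirr, ?_⟩
    intro f hf
    obtain ⟨m, u, hmu⟩ := hmain f hf
    exact ⟨m, ⟨u, hmu.symm⟩⟩
  haveI := hdvr
  haveI hloc : IsLocalRing S := inferInstance
  refine ⟨hdvr, ⟨hloc, ?_⟩, ?_⟩
  · ext f
    rw [IsLocalRing.mem_maximalIdeal, mem_nonunits_iff, Ideal.mem_span_singleton]
    constructor
    · intro hf
      have h0 : PowerSeries.constantCoeff (f : PowerSeries ℂ) = 0 := by
        by_contra h; exact hf (hunit f h)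
      obtain ⟨g, hg, hfg⟩ := ((hmem _).mp f.2).shift h0
      refine ⟨⟨g, (hmem g).mpr hg⟩, Subtype.ext ?_⟩
      rw [hfg]
      rw [← hx]
      norm_cast
    · rintro ⟨g, rfl⟩
      intro hu
      apply hunit' _ hu
      have : ((x * g : S) : PowerSeries ℂ) = PowerSeries.X * (g : PowerSeries ℂ) := by
        rw [← hx]; norm_cast
      rw [this, map_mul, constantCoeff_X, zero_mul]
  · intro f hf
    obtain ⟨m, u, hmu⟩ := hmain f hf
    refine ⟨m, ⟨u, hmu⟩, ?_⟩
    rintro m' ⟨u', hu'⟩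
    have h1 := horder m u
    have h2 := horder m' u'
    rw [← hmu] at h1
    rw [← hu'] at h2
    have : (m' : ℕ∞) = (m : ℕ∞) := by rw [← h1, ← h2]
    exact_mod_cast this
end

section
/- Let U be an open subset of ℂ^d and let (f_j)_{j∈ℕ} be a sequence of holomorphic functions on U. The following are equivalent: (a) for every compact subset K ⊆ U there exists a constant C > 0 such that sup_{x∈K} |f_j(x)| ≤ C^{j+1}·j! for all j ∈ ℕ; (b) there exist an open set W ⊆ U × ℂ containing U × {0} and a holomorphic function F : W → ℂ such that for every (x,t) ∈ W the series Σ_{j≥0} f_j(x)·t^j/j! converges absolutely with sum F(x,t). -/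
open Metric Set

/-- Cauchy estimate for the Fréchet derivative of a holomorphic function on a
normed space over `ℂ`. -/
lemma cauchy_fderiv_bound {E : Type*} [NormedAddCommGroup E] [NormedSpace ℂ E]
    {g : E → ℂ} {V : Set E} (hV : IsOpen V) (hg : DifferentiableOn ℂ g V)
    {p : E} {R M : ℝ} (hR : 0 < R) (hsub : Metric.closedBall p R ⊆ V)
    (hM : ∀ q ∈ Metric.closedBall p R, ‖g q‖ ≤ M) :
    ‖fderiv ℂ g p‖ ≤ M / R := by
  have hM0 : 0 ≤ M := (norm_nonneg _).trans (hM p (mem_closedBall_self hR.le))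
  refine ContinuousLinearMap.opNorm_le_bound _ (div_nonneg hM0 hR.le) (fun v => ?_)
  rcases eq_or_ne v 0 with rfl | hv
  · simp
  have hv' : 0 < ‖v‖ := norm_pos_iff.mpr hv
  set r : ℝ := R / ‖v‖ with hr_def
  have hr : 0 < r := div_pos hR hv'
  set h : ℂ → ℂ := fun z => g (p + z • v) with hh
  set s : Set ℂ := {z | p + z • v ∈ V} with hs
  have hs_open : IsOpen s := hV.preimage (by continuity)
  have hmem : ∀ z : ℂ, ‖z‖ ≤ r → p + z • v ∈ Metric.closedBall p R := by
    intro z hz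
    have : ‖(p + z • v) - p‖ ≤ R := by
      rw [add_sub_cancel_left, norm_smul]
      calc ‖z‖ * ‖v‖ ≤ r * ‖v‖ := by gcongr
        _ = R := by rw [hr_def]; field_simp
    rw [Metric.mem_closedBall, dist_eq_norm]; exact this
  have hball_s : Metric.closedBall (0:ℂ) r ⊆ s := by
    intro z hz
    exact hsub (hmem z (by simpa [Metric.mem_closedBall, dist_eq_norm] using hz))
  have hdiff : DifferentiableOn ℂ h s := by
    intro z hz
    have h1 : DifferentiableAt ℂ g (p + z • v) := hg.differentiableAt (hV.mem_nhds hz)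
    have h2 : DifferentiableAt ℂ (fun z : ℂ => p + z • v) z :=
      (differentiableAt_id.smul_const v).const_add p
    exact (h1.comp z h2).differentiableWithinAt
  have hd0 : DifferentiableAt ℂ g p :=
    hg.differentiableAt (hV.mem_nhds (hsub (mem_closedBall_self hR.le)))
  have hline : HasDerivAt (fun z : ℂ => p + z • v) v 0 := by
    simpa using ((hasDerivAt_id (0:ℂ)).smul_const v).const_add p
  have hkey : HasDerivAt h (fderiv ℂ g p v) 0 := by
    have := hd0.hasFDerivAt.comp_hasDerivAt_of_eq 0 hline (by simp)
    exact this
  have e1 : deriv h 0 = fderiv ℂ g p v := hkey.deriv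
  have e2 : Complex.cderiv r h 0 = deriv h 0 :=
    Complex.cderiv_eq_deriv hs_open hdiff hr hball_s
  have e3 : ‖Complex.cderiv r h 0‖ ≤ M / r := by
    refine Complex.norm_cderiv_le hr (fun w hw => ?_)
    have hwr : ‖w‖ = r := by simpa [mem_sphere_iff_norm] using hw
    exact hM _ (hmem w hwr.le)
  calc ‖fderiv ℂ g p v‖ = ‖Complex.cderiv r h 0‖ := by rw [e2, e1]
    _ ≤ M / r := e3
    _ = M / R * ‖v‖ := by rw [hr_def]; field_simp

lemma forward_local (d : ℕ) (U : Set (Fin d → ℂ)) (hU : IsOpen U)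
    (f : ℕ → (Fin d → ℂ) → ℂ) (hf : ∀ j : ℕ, DifferentiableOn ℂ (f j) U)
    (hgrow : ∀ K : Set (Fin d → ℂ), K ⊆ U → IsCompact K →
      ∃ C : ℝ, 0 < C ∧ ∀ j : ℕ, ∀ x ∈ K, ‖f j x‖ ≤ C ^ (j + 1) * j.factorial)
    (x₀ : Fin d → ℂ) (hx₀ : x₀ ∈ U) :
    ∃ B : Set ((Fin d → ℂ) × ℂ), IsOpen B ∧ (x₀, (0:ℂ)) ∈ B ∧
      B ⊆ U ×ˢ (Set.univ : Set ℂ) ∧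
      ∀ p ∈ B, DifferentiableAt ℂ
          (fun q : (Fin d → ℂ) × ℂ => ∑' j : ℕ, f j q.1 * q.2 ^ j / (j.factorial : ℂ)) p ∧
        Summable (fun j : ℕ => ‖f j p.1 * p.2 ^ j / (j.factorial : ℂ)‖) := by
  obtain ⟨ε, hε, hcb⟩ := Metric.nhds_basis_closedBall.mem_iff.mp (hU.mem_nhds hx₀)
  obtain ⟨C, hC, hbd⟩ := hgrow (closedBall x₀ ε) hcb (isCompact_closedBall _ _)
  set ρ : ℝ := min (ε/3) (1/(4*C)) with hρ_def
  have hρpos : 0 < ρ := lt_min (by linarith) (by positivity)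
  have hρε : ρ ≤ ε/3 := min_le_left _ _
  have hρC : ρ ≤ 1/(4*C) := min_le_right _ _
  set B : Set ((Fin d → ℂ) × ℂ) := ball x₀ (ε/3) ×ˢ ball (0:ℂ) ρ with hB_def
  set V : Set ((Fin d → ℂ) × ℂ) := ball x₀ ε ×ˢ ball (0:ℂ) (3*ρ) with hV_def
  have hBopen : IsOpen B := isOpen_ball.prod isOpen_ball
  have hVopen : IsOpen V := isOpen_ball.prod isOpen_ball
  have hBmem : (x₀, (0:ℂ)) ∈ B :=
    ⟨mem_ball_self (by linarith), mem_ball_self hρpos⟩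
  have hBsubU : B ⊆ U ×ˢ (Set.univ : Set ℂ) := by
    rintro ⟨y, t⟩ ⟨hy, -⟩
    exact ⟨hcb (ball_subset_closedBall (ball_subset_ball (by linarith) hy)), trivial⟩
  -- differentiability of the terms on V
  have hVdiff : ∀ j : ℕ, DifferentiableOn ℂ
      (fun q : (Fin d → ℂ) × ℂ => f j q.1 * q.2 ^ j / (j.factorial : ℂ)) V := by
    intro j q hq
    have hq1 : q.1 ∈ U := hcb (ball_subset_closedBall hq.1)
    have h1 : DifferentiableAt ℂ (f j) q.1 := (hf j q.1 hq1).differentiableAt (hU.mem_nhds hq1)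
    have h2 := DifferentiableAt.comp (𝕜 := ℂ) q h1
      (differentiableAt_fst (𝕜 := ℂ) (p := q))
    have h3 : DifferentiableAt ℂ (fun q : (Fin d → ℂ) × ℂ => q.2 ^ j) q :=
      differentiableAt_snd.pow j
    have h4 : DifferentiableAt ℂ (fun q : (Fin d → ℂ) × ℂ => f j q.1 * q.2 ^ j) q :=
      h2.mul h3
    simp only [div_eq_mul_inv]
    exact (h4.mul_const (((j.factorial : ℕ) : ℂ))⁻¹).differentiableWithinAt
  -- norm bound for terms
  have hgb : ∀ j : ℕ, ∀ q : (Fin d → ℂ) × ℂ, q.1 ∈ closedBall x₀ ε → ‖q.2‖ ≤ 2*ρ →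
      ‖f j q.1 * q.2 ^ j / (j.factorial : ℂ)‖ ≤ C * (1/2)^j := by
    intro j q hq1 hq2
    have h1 : ‖f j q.1‖ ≤ C^(j+1) * j.factorial := hbd j q.1 hq1
    have hfac : (0:ℝ) < (j.factorial : ℝ) := by exact_mod_cast j.factorial_pos
    have h2 : ‖f j q.1 * q.2 ^ j / (j.factorial : ℂ)‖
        = ‖f j q.1‖ * ‖q.2‖^j / (j.factorial : ℝ) := by
      simp [norm_mul, norm_div, norm_pow]
    rw [h2]
    have h3 : ‖f j q.1‖ * ‖q.2‖^j / (j.factorial : ℝ)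
        ≤ (C^(j+1) * j.factorial) * (2*ρ)^j / (j.factorial : ℝ) := by
      gcongr
    refine h3.trans ?_
    have h4 : (C^(j+1) * j.factorial) * (2*ρ)^j / (j.factorial : ℝ) = C * (2*ρ*C)^j := by
      field_simp
      ring
    rw [h4]
    have h5 : 2*ρ*C ≤ 1/2 := by
      have h6 : ρ * C ≤ 1/(4*C)*C := mul_le_mul_of_nonneg_right hρC hC.le
      have h7 : 1/(4*C)*C = 1/4 := by field_simp
      rw [h7] at h6
      linarith
    exact mul_le_mul_of_nonneg_left (pow_le_pow_left₀ (by positivity) h5 j) hC.le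
  -- geometry of product balls
  have hB_in : ∀ p ∈ B, ∀ q ∈ closedBall p ρ,
      q.1 ∈ closedBall x₀ ε ∧ ‖q.2‖ ≤ 2*ρ ∧ q ∈ V := by
    rintro ⟨y, t⟩ ⟨hy, ht⟩ q hq
    rw [mem_closedBall, Prod.dist_eq, max_le_iff] at hq
    obtain ⟨hq1, hq2⟩ := hq
    have hy' : dist y x₀ < ε/3 := mem_ball.mp hy
    have ht' : dist t 0 < ρ := mem_ball.mp ht
    have e0 : dist q.1 x₀ ≤ dist q.1 y + dist y x₀ := dist_triangle _ _ _
    have e2 : dist q.2 0 ≤ dist q.2 t + dist t 0 := dist_triangle _ _ _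
    have e3 : ‖q.2‖ = dist q.2 0 := (dist_zero_right _).symm
    refine ⟨mem_closedBall.mpr (by linarith), by rw [e3]; linarith,
      mem_ball.mpr (by linarith), mem_ball.mpr (by linarith)⟩
  have hBV : B ⊆ V := fun p hp => (hB_in p hp p (mem_closedBall_self hρpos.le)).2.2
  have hfd : ∀ j : ℕ, ∀ p ∈ B,
      ‖fderiv ℂ (fun q : (Fin d → ℂ) × ℂ => f j q.1 * q.2 ^ j / (j.factorial : ℂ)) p‖
        ≤ (C/ρ) * (1/2)^j := by
    intro j p hp
    have hb := cauchy_fderiv_bound hVopen (hVdiff j) hρpos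
      (fun q hq => (hB_in p hp q hq).2.2)
      (fun q hq => hgb j q (hB_in p hp q hq).1 (hB_in p hp q hq).2.1)
    refine hb.trans (le_of_eq ?_)
    ring
  have hsummax : ∀ p ∈ B, Summable (fun j : ℕ => ‖f j p.1 * p.2 ^ j / (j.factorial : ℂ)‖) := by
    intro p hp
    refine Summable.of_nonneg_of_le (fun j => norm_nonneg _)
      (fun j => hgb j p (hB_in p hp p (mem_closedBall_self hρpos.le)).1
        (hB_in p hp p (mem_closedBall_self hρpos.le)).2.1) ?_
    exact (summable_geometric_of_lt_one (by norm_num) (by norm_num)).mul_left C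
  refine ⟨B, hBopen, hBmem, hBsubU, fun p hp => ⟨?_, hsummax p hp⟩⟩
  have hu : Summable (fun j : ℕ => (C/ρ) * (1/2:ℝ)^j) :=
    (summable_geometric_of_lt_one (by norm_num) (by norm_num)).mul_left _
  have hpre : IsPreconnected B := ((convex_ball _ _).prod (convex_ball _ _)).isPreconnected
  have hder := hasFDerivAt_tsum_of_isPreconnected hu hBopen hpre
    (fun j q hq => ((hVdiff j q (hBV hq)).differentiableAt (hVopen.mem_nhds (hBV hq))).hasFDerivAt)
    (fun j q hq => hfd j q hq) hBmem (Summable.of_norm (hsummax _ hBmem)) hp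
  exact hder.differentiableAt

lemma reverse_dir (d : ℕ) (U : Set (Fin d → ℂ)) (hU : IsOpen U)
    (f : ℕ → (Fin d → ℂ) → ℂ)
    (W : Set ((Fin d → ℂ) × ℂ)) (F : (Fin d → ℂ) × ℂ → ℂ)
    (hWopen : IsOpen W) (hWsub : W ⊆ U ×ˢ (Set.univ : Set ℂ))
    (hW0 : ∀ x ∈ U, ((x, (0 : ℂ)) ∈ W)) (hFdiff : DifferentiableOn ℂ F W)
    (hFsum : ∀ p ∈ W, (Summable fun j : ℕ => ‖f j p.1 * p.2 ^ j / j.factorial‖) ∧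
        HasSum (fun j : ℕ => f j p.1 * p.2 ^ j / j.factorial) (F p))
    (K : Set (Fin d → ℂ)) (hKU : K ⊆ U) (hK : IsCompact K) :
    ∃ C : ℝ, 0 < C ∧ ∀ j : ℕ, ∀ x ∈ K, ‖f j x‖ ≤ C ^ (j + 1) * j.factorial := by
  classical
  have hKW : (K ×ˢ ({0} : Set ℂ)) ⊆ W := by
    rintro ⟨x, t⟩ ⟨hx, ht⟩
    rw [Set.mem_singleton_iff] at ht
    subst ht
    exact hW0 x (hKU hx)
  obtain ⟨δ, hδ, hth⟩ :=
    (hK.prod isCompact_singleton).exists_thickening_subset_open hWopen hKW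
  set ε : ℝ := δ/2 with hε_def
  have hε : 0 < ε := by positivity
  have htube : ∀ x ∈ K, ∀ t : ℂ, ‖t‖ ≤ ε → (x, t) ∈ W := by
    intro x hx t ht
    refine hth (Metric.mem_thickening_iff.mpr ⟨(x, 0), ⟨hx, rfl⟩, ?_⟩)
    rw [Prod.dist_eq]
    have h1 : dist x x = 0 := dist_self x
    have h2 : dist t 0 = ‖t‖ := dist_zero_right t
    rw [h1, h2]
    have : max 0 ‖t‖ = ‖t‖ := max_eq_right (norm_nonneg t)
    rw [this]
    linarith
  have hLsub : (K ×ˢ closedBall (0:ℂ) ε) ⊆ W := by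
    rintro ⟨x, t⟩ ⟨hx, ht⟩
    exact htube x hx t (by simpa [dist_zero_right] using ht)
  obtain ⟨M, hM⟩ := (hK.prod (isCompact_closedBall (0:ℂ) ε)).exists_bound_of_continuousOn
    (hFdiff.continuousOn.mono hLsub)
  set C : ℝ := max (max M 1) ε⁻¹ with hC_def
  have hC1 : (1:ℝ) ≤ C := le_max_of_le_left (le_max_right _ _)
  have hCpos : 0 < C := lt_of_lt_of_le one_pos hC1
  have hMC : M ≤ C := le_max_of_le_left (le_max_left _ _)
  have hεC : ε⁻¹ ≤ C := le_max_right _ _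
  refine ⟨C, hCpos, fun j x hx => ?_⟩
  have hM0 : 0 ≤ M := (norm_nonneg _).trans (hM (x, 0) ⟨hx, mem_closedBall_self hε.le⟩)
  set εn : NNReal := ⟨ε, hε.le⟩ with hεn_def
  have hεn : (εn : ℝ) = ε := rfl
  have hεnpos : 0 < εn := by
    rw [← NNReal.coe_lt_coe, hεn]; exact hε
  -- the one-variable slice
  have hdiffx : DifferentiableOn ℂ (fun t : ℂ => F (x, t)) (closedBall (0:ℂ) (εn:ℝ)) := by
    intro t ht
    rw [hεn] at ht
    have h1 : (x, t) ∈ W := htube x hx t (by simpa [dist_zero_right] using ht)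
    exact ((hFdiff.differentiableAt (hWopen.mem_nhds h1)).comp t
      ((differentiableAt_const x).prodMk differentiableAt_id)).differentiableWithinAt
  have hq := hdiffx.hasFPowerSeriesOnBall hεnpos
  set px := FormalMultilinearSeries.ofScalars ℂ (fun j => f j x / (j.factorial : ℂ)) with hpx
  have hsum_eps : Summable (fun j : ℕ => ‖f j x * (ε:ℂ)^j / (j.factorial:ℂ)‖) := by
    have hmem : (x, (ε:ℂ)) ∈ W := htube x hx _ (by
      rw [Complex.norm_real, Real.norm_eq_abs, abs_of_nonneg hε.le])
    exact (hFsum (x, (ε:ℂ)) hmem).1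
  have hp : HasFPowerSeriesOnBall (fun t : ℂ => F (x, t)) px 0 εn := by
    refine ⟨px.le_radius_of_summable ?_, by exact_mod_cast hεnpos, ?_⟩
    · refine hsum_eps.congr fun n => ?_
      rw [hpx, FormalMultilinearSeries.ofScalars_norm]
      rw [norm_div, norm_mul, norm_div, norm_pow, Complex.norm_real, Real.norm_eq_abs,
        abs_of_nonneg hε.le, Complex.norm_natCast, hεn]
      ring
    · intro y hy
      rw [mem_emetric_ball_zero_iff, enorm_eq_nnnorm, ENNReal.coe_lt_coe, ← NNReal.coe_lt_coe,
        coe_nnnorm, hεn] at hy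
      have hmem : (x, y) ∈ W := htube x hx y hy.le
      have h := (hFsum (x, y) hmem).2
      have hfun : (fun n : ℕ => px n fun _ => y)
          = fun jj : ℕ => f jj x * y ^ jj / (jj.factorial : ℂ) := by
        funext n
        rw [hpx, FormalMultilinearSeries.ofScalars_apply_eq, smul_eq_mul]
        ring
      rw [hfun, zero_add]
      exact h
  have heq : px = cauchyPowerSeries (fun t : ℂ => F (x, t)) 0 εn :=
    hp.hasFPowerSeriesAt.eq_formalMultilinearSeries hq.hasFPowerSeriesAt
  -- integral bound
  have hptw : ∀ θ : ℝ, ‖F (x, circleMap 0 (εn:ℝ) θ)‖ ≤ M := by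
    intro θ
    exact hM _ ⟨hx, by rw [hεn]; exact circleMap_mem_closedBall 0 hε.le θ⟩
  have hcont : ContinuousOn (fun θ : ℝ => ‖F (x, circleMap 0 (εn:ℝ) θ)‖)
      (Set.uIcc 0 (2*Real.pi)) := by
    refine (hFdiff.continuousOn.comp
      ((continuous_const.prodMk (continuous_circleMap 0 _)).continuousOn) ?_).norm
    intro θ _
    refine htube x hx _ ?_
    rw [norm_circleMap_zero, hεn, abs_of_nonneg hε.le]
  have hI : (∫ θ : ℝ in (0:ℝ)..2*Real.pi, ‖F (x, circleMap 0 (εn:ℝ) θ)‖)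
      ≤ 2*Real.pi * M := by
    have h1 := intervalIntegral.integral_mono_on (μ := MeasureTheory.volume) (by positivity : (0:ℝ) ≤ 2*Real.pi)
      hcont.intervalIntegrable intervalIntegrable_const (fun θ _ => hptw θ)
    simpa using h1
  have hcoef : ‖px j‖ ≤ M * (ε⁻¹)^j := by
    rw [heq]
    refine (norm_cauchyPowerSeries_le _ _ _ j).trans ?_
    rw [hεn, abs_of_nonneg hε.le]
    have h2 : (2*Real.pi)⁻¹ * (∫ θ : ℝ in (0:ℝ)..2*Real.pi, ‖F (x, circleMap 0 (εn:ℝ) θ)‖)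
        ≤ (2*Real.pi)⁻¹ * (2*Real.pi*M) := by
      rw [hεn] at hI ⊢
      gcongr
    have h3 : (2*Real.pi)⁻¹ * (2*Real.pi*M) = M := by
      field_simp
    calc ((2*Real.pi)⁻¹ * ∫ θ : ℝ in (0:ℝ)..2*Real.pi, ‖F (x, circleMap 0 ((εn:ℝ)) θ)‖) * ε⁻¹^j
        ≤ ((2*Real.pi)⁻¹ * (2*Real.pi*M)) * ε⁻¹^j := by
          rw [hεn] at h2 ⊢
          exact mul_le_mul_of_nonneg_right h2 (by positivity)
      _ = M * ε⁻¹^j := by rw [h3]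
  have hnorm : ‖f j x‖ = ‖px j‖ * (j.factorial : ℝ) := by
    rw [hpx, FormalMultilinearSeries.ofScalars_norm, norm_div, Complex.norm_natCast]
    have hfac : (0:ℝ) < (j.factorial : ℝ) := by exact_mod_cast j.factorial_pos
    field_simp
  rw [hnorm]
  have hfac0 : (0:ℝ) ≤ (j.factorial : ℝ) := by positivity
  calc ‖px j‖ * (j.factorial : ℝ) ≤ (M * ε⁻¹^j) * (j.factorial : ℝ) := by gcongr
    _ ≤ (C * C^j) * (j.factorial : ℝ) := by
        have hh : M * ε⁻¹^j ≤ C * C^j :=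
          mul_le_mul hMC (pow_le_pow_left₀ (by positivity) hεC j) (by positivity) hCpos.le
        exact mul_le_mul_of_nonneg_right hh hfac0
    _ = C^(j+1) * (j.factorial : ℝ) := by rw [pow_succ']


/-- for a sequence `(f_j)` of holomorphic functions on an open set
`U ⊆ ℂ^d`, the growth condition `sup_K |f_j| ≤ C^{j+1}·j!` on every compact `K ⊆ U` is
equivalent to the existence of a holomorphic function `F` on an open neighborhood
`W ⊆ U × ℂ` of `U × {0}` with `F(x,t) = Σ_j f_j(x)·t^j/j!` (absolutely convergent)
on `W`.  (This is the paper's identification `O_X^τ(0) ≅ O_{X×ℂ}|_{X×{0}}`.) -/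
theorem growth_iff_holomorphic_extension (d : ℕ) (U : Set (Fin d → ℂ)) (hU : IsOpen U)
    (f : ℕ → (Fin d → ℂ) → ℂ) (hf : ∀ j : ℕ, DifferentiableOn ℂ (f j) U) :
    (∀ K : Set (Fin d → ℂ), K ⊆ U → IsCompact K →
      ∃ C : ℝ, 0 < C ∧ ∀ j : ℕ, ∀ x ∈ K, ‖f j x‖ ≤ C ^ (j + 1) * j.factorial) ↔
    (∃ (W : Set ((Fin d → ℂ) × ℂ)) (F : (Fin d → ℂ) × ℂ → ℂ),
      IsOpen W ∧ W ⊆ U ×ˢ (Set.univ : Set ℂ) ∧ (∀ x ∈ U, ((x, (0 : ℂ)) ∈ W)) ∧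
      DifferentiableOn ℂ F W ∧
      ∀ p ∈ W, (Summable fun j : ℕ => ‖f j p.1 * p.2 ^ j / j.factorial‖) ∧
        HasSum (fun j : ℕ => f j p.1 * p.2 ^ j / j.factorial) (F p)) := by
  constructor
  · intro hgrow
    have key := forward_local d U hU f hf hgrow
    choose B hBopen hBmem hBsub hBprop using key
    refine ⟨⋃ (x₀ : Fin d → ℂ) (h : x₀ ∈ U), B x₀ h,
      fun p => ∑' j : ℕ, f j p.1 * p.2 ^ j / (j.factorial : ℂ), ?_, ?_, ?_, ?_, ?_⟩
    · exact isOpen_iUnion fun x₀ => isOpen_iUnion fun h => hBopen x₀ h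
    · exact Set.iUnion₂_subset fun x₀ h => hBsub x₀ h
    · intro x hx
      exact Set.mem_iUnion₂.mpr ⟨x, hx, hBmem x hx⟩
    · intro p hp
      obtain ⟨x₀, h, hpB⟩ := Set.mem_iUnion₂.mp hp
      exact ((hBprop x₀ h p hpB).1).differentiableWithinAt
    · intro p hp
      obtain ⟨x₀, h, hpB⟩ := Set.mem_iUnion₂.mp hp
      exact ⟨(hBprop x₀ h p hpB).2, ((hBprop x₀ h p hpB).2.of_norm).hasSum⟩
  · rintro ⟨W, F, hWopen, hWsub, hW0, hFdiff, hFsum⟩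
    exact fun K hKU hK => reverse_dir d U hU f W F hWopen hWsub hW0 hFdiff hFsum K hKU hK
end
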